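/- If the optimal constant in the 2-variable case is C_{(2),p} = 2^{1/2−1/p} for p ≥ p₀/(p₀−1), then combining with the inequality (Σ_j (Σ_k |A(e_j,e_k)|^{p/(p−1)})^{2(p−1)/p})^{1/2} ≤ √2‖A‖ via the mixed Hölder inequality yields C_{p,∞} ≤ (√2)^{1/2} · (2^{(p−2)/(2p)})^{1/2} = 2^{1/2 − 1/(2p)} for the exponent 4p/(3p−2); in particular 2^{1/2−1/p} ≤ C_{p,∞} ≤ 2^{1/2−1/(2p)} for all p ≥ p₀/(p₀−1). -/

import Mathlib

open Real

noncomputable section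

/-- `c₀`: the space of real sequences vanishing at infinity, with the sup norm. -/
abbrev Czero := ZeroAtInftyContinuousMap ℕ ℝ

noncomputable instance : SeminormedAddCommGroup (Czero →L[ℝ] ℝ) :=
  ContinuousLinearMap.toSeminormedAddCommGroup

noncomputable instance : NormedSpace ℝ (Czero →L[ℝ] ℝ) :=
  ContinuousLinearMap.toNormedSpace

noncomputable instance (k : ℕ) :
    SeminormedAddCommGroup (ContinuousMultilinearMap ℝ (fun _ : Fin k => Czero) ℝ) :=
  ContinuousMultilinearMap.seminormedAddCommGroup

noncomputable instance (k : ℕ) :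
    NormedSpace ℝ (ContinuousMultilinearMap ℝ (fun _ : Fin k => Czero) ℝ) :=
  ContinuousMultilinearMap.normedSpace

/-- The canonical unit vector `e_k` in `c₀`. -/
def e0 (k : ℕ) : Czero :=
{ toFun := fun n => if n = k then 1 else 0,
  continuous_toFun := continuous_of_discreteTopology,
  zero_at_infty' := by
    rw [cocompact_eq_atTop]
    refine Filter.Tendsto.congr' ?_ tendsto_const_nhds
    filter_upwards [Filter.eventually_gt_atTop k] with n hn
    simp [Nat.ne_of_gt hn] }

/-- The canonical unit vector `e_j` in `ℓ_p`. -/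
def ep (p : ℝ) [Fact (1 ≤ ENNReal.ofReal p)] (j : ℕ) :
    lp (fun _ : ℕ => ℝ) (ENNReal.ofReal p) := lp.single _ j 1

/-- Evaluation at `k` as a continuous linear functional on `c₀`. -/
def deltaCLM (k : ℕ) : Czero →L[ℝ] ℝ :=
  LinearMap.mkContinuous
    { toFun := fun y => y k, map_add' := fun a b => rfl, map_smul' := fun c a => rfl } 1
    (fun y => by
      have h1 : ‖y.toBCF k‖ ≤ ‖y.toBCF‖ := y.toBCF.norm_coe_le_norm k
      rw [ZeroAtInftyContinuousMap.norm_toBCF_eq_norm] at h1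
      simpa using h1)

lemma deltaCLM_norm_le (k : ℕ) : ‖deltaCLM k‖ ≤ 1 :=
  LinearMap.mkContinuous_norm_le _ zero_le_one _

/-- The extremal bilinear form, as a linear map. -/
def AexL (p : ℝ) [Fact (1 ≤ ENNReal.ofReal p)] :
    lp (fun _ : ℕ => ℝ) (ENNReal.ofReal p) →ₗ[ℝ] (Czero →L[ℝ] ℝ) where
  toFun x := (x 0 + x 1) • deltaCLM 0 + (x 0 - x 1) • deltaCLM 1
  map_add' x y := by
    dsimp only
    have h0 : (x + y) 0 = x 0 + y 0 := by rw [lp.coeFn_add]; rfl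
    have h1 : (x + y) 1 = x 1 + y 1 := by rw [lp.coeFn_add]; rfl
    rw [h0, h1]
    module
  map_smul' c x := by
    dsimp only
    have h0 : (c • x) 0 = c * x 0 := by rw [lp.coeFn_smul]; rfl
    have h1 : (c • x) 1 = c * x 1 := by rw [lp.coeFn_smul]; rfl
    rw [h0, h1]
    simp only [RingHom.id_apply]
    module

lemma AexL_bound (p : ℝ) [Fact (1 ≤ ENNReal.ofReal p)]
    (x : lp (fun _ : ℕ => ℝ) (ENNReal.ofReal p)) :
    ‖AexL p x‖ ≤ 2 * ‖x‖ := by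
  have hq0 : (ENNReal.ofReal p) ≠ 0 := by
    have := (Fact.out : 1 ≤ ENNReal.ofReal p)
    intro h; rw [h] at this; exact (by simp at this)
  have h0 : |x 0| ≤ ‖x‖ := lp.norm_apply_le_norm hq0 x 0
  have h1 : |x 1| ≤ ‖x‖ := lp.norm_apply_le_norm hq0 x 1
  have key : |x 0 + x 1| + |x 0 - x 1| ≤ 2 * ‖x‖ := by
    rcases abs_cases (x 0 + x 1) with ⟨h,_⟩|⟨h,_⟩ <;>
      rcases abs_cases (x 0 - x 1) with ⟨h',_⟩|⟨h',_⟩ <;> rw [h, h'] <;>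
      linarith [le_abs_self (x 0), neg_abs_le (x 0), le_abs_self (x 1), neg_abs_le (x 1)]
  calc ‖AexL p x‖ ≤ ‖(x 0 + x 1) • deltaCLM 0‖ + ‖(x 0 - x 1) • deltaCLM 1‖ := norm_add_le _ _
    _ = |x 0 + x 1| * ‖deltaCLM 0‖ + |x 0 - x 1| * ‖deltaCLM 1‖ := by
        rw [norm_smul, norm_smul]; rfl
    _ ≤ |x 0 + x 1| * 1 + |x 0 - x 1| * 1 := by
        gcongr <;> [exact deltaCLM_norm_le 0; exact deltaCLM_norm_le 1]
    _ ≤ 2 * ‖x‖ := by rw [mul_one, mul_one]; exact key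

/-- The extremal bilinear form. -/
def Aex (p : ℝ) [Fact (1 ≤ ENNReal.ofReal p)] :
    lp (fun _ : ℕ => ℝ) (ENNReal.ofReal p) →L[ℝ] (Czero →L[ℝ] ℝ) :=
  (AexL p).mkContinuous 2 (AexL_bound p)

lemma Aex_norm_le (p : ℝ) [Fact (1 ≤ ENNReal.ofReal p)] : ‖Aex p‖ ≤ 2 :=
  LinearMap.mkContinuous_norm_le _ (by norm_num) _

lemma ep_apply (p : ℝ) [Fact (1 ≤ ENNReal.ofReal p)] (j i : ℕ) :
    ep p j i = if i = j then 1 else 0 := by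
  rcases eq_or_ne i j with h | h
  · subst h; rw [if_pos rfl]; exact lp.single_apply_self _ _ _
  · rw [if_neg h]; exact lp.single_apply_ne _ _ _ h

lemma Aex_apply (p : ℝ) [Fact (1 ≤ ENNReal.ofReal p)]
    (x : lp (fun _ : ℕ => ℝ) (ENNReal.ofReal p)) (y : Czero) :
    Aex p x y = (x 0 + x 1) * y 0 + (x 0 - x 1) * y 1 := rfl

lemma e0_apply (k n : ℕ) : e0 k n = if n = k then 1 else 0 := rfl

lemma Aex_entry (p : ℝ) [Fact (1 ≤ ENNReal.ofReal p)] (j k : ℕ) (hj : j < 2) (hk : k < 2) :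
    |Aex p (ep p j) (e0 k)| = 1 := by
  interval_cases j <;> interval_cases k <;>
    simp [Aex_apply, ep_apply, e0_apply]

/-- The mixed Hölder step: combining the two mixed-norm estimates gives the
`4p/(3p-2)`-estimate. -/
lemma key_holder {p : ℝ} (hp2 : 2 < p) {N : ℕ} (a : ℕ → ℕ → ℝ) (ha : ∀ j k, 0 ≤ a j k)
    {M1 M2 : ℝ}
    (h1 : (∑ j ∈ Finset.range N, (∑ k ∈ Finset.range N,
        a j k ^ (2 : ℝ)) ^ ((1 / 2) * (p / (p - 1)))) ^ ((p - 1) / p) ≤ M1)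
    (h2 : (∑ j ∈ Finset.range N, (∑ k ∈ Finset.range N,
        a j k ^ (p / (p - 1))) ^ (2 * ((p - 1) / p))) ^ ((1 : ℝ) / 2) ≤ M2) :
    (∑ j ∈ Finset.range N, ∑ k ∈ Finset.range N, a j k ^ (4 * p / (3 * p - 2))) ^
        ((3 * p - 2) / (4 * p)) ≤ M1 ^ ((1 : ℝ) / 2) * M2 ^ ((1 : ℝ) / 2) := by
  have hp0 : 0 < p := by linarith
  have hpm : 0 < p - 1 := by linarith
  have h3p : (0 : ℝ) < 3 * p - 2 := by linarith
  set r : ℝ := 4 * p / (3 * p - 2) with hrdef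
  set q' : ℝ := p / (p - 1) with hqdef
  have hr0 : 0 < r := by rw [hrdef]; positivity
  have hr1 : 1 < r := by rw [hrdef, lt_div_iff₀ h3p]; linarith
  have hr2 : r < 2 := by rw [hrdef, div_lt_iff₀ h3p]; linarith
  have h4r : 0 < 4 - r := by linarith
  have hq0 : 0 < q' := by rw [hqdef]; positivity
  have hq1 : 1 < q' := by rw [hqdef, lt_div_iff₀ hpm]; linarith
  -- conjugate exponent pairs
  have hcs : Real.HolderConjugate (4 / r) (4 / (4 - r)) := by
    rw [Real.holderConjugate_iff]
    constructor
    · rw [lt_div_iff₀ hr0]; linarith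
    · rw [inv_div, inv_div]; ring
  have hct : Real.HolderConjugate (2 * q' / r) (4 / r) := by
    rw [Real.holderConjugate_iff]
    constructor
    · rw [lt_div_iff₀ hr0]; linarith
    · rw [inv_div, inv_div, hrdef, hqdef]
      field_simp [show p * 3 - 2 ≠ 0 by linarith]
      ring
  -- exponent identities
  have hexp1 : r / 2 * (4 / r) = 2 := by field_simp; ring
  have hexp2 : r / 2 * (4 / (4 - r)) = q' := by
    rw [hqdef, hrdef, div_mul_div_comm,
      div_eq_div_iff (by rw [← hrdef]; positivity) hpm.ne']
    field_simp [show p * 3 - 2 ≠ 0 by linarith]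
    ring
  have hexp3 : r / 4 * (2 * q' / r) = 1 / 2 * q' := by field_simp; ring
  have hexp4 : (4 - r) / 4 * (4 / r) = 2 * ((p - 1) / p) := by
    rw [hrdef]
    field_simp [show p * 3 - 2 ≠ 0 by linarith]
    ring
  -- row-wise Hölder
  have step1 : ∀ j, (∑ k ∈ Finset.range N, a j k ^ r) ≤
      (∑ k ∈ Finset.range N, a j k ^ (2 : ℝ)) ^ (r / 4) *
        (∑ k ∈ Finset.range N, a j k ^ q') ^ ((4 - r) / 4) := by
    intro j
    have H := Real.inner_le_Lp_mul_Lq (Finset.range N)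
      (fun k => a j k ^ (r / 2)) (fun k => a j k ^ (r / 2)) hcs
    have eL : ∑ k ∈ Finset.range N, a j k ^ (r / 2) * a j k ^ (r / 2)
        = ∑ k ∈ Finset.range N, a j k ^ r := by
      refine Finset.sum_congr rfl fun k _ => ?_
      rw [← Real.rpow_add' (ha j k)
        (by intro h; rw [show r/2 + r/2 = r by ring] at h; exact hr0.ne' h)]
      congr 1; ring
    have eR1 : ∑ k ∈ Finset.range N, |a j k ^ (r / 2)| ^ (4 / r)
        = ∑ k ∈ Finset.range N, a j k ^ (2 : ℝ) := by
      refine Finset.sum_congr rfl fun k _ => ?_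
      rw [abs_of_nonneg (Real.rpow_nonneg (ha j k) _), ← Real.rpow_mul (ha j k), hexp1]
    have eR2 : ∑ k ∈ Finset.range N, |a j k ^ (r / 2)| ^ (4 / (4 - r))
        = ∑ k ∈ Finset.range N, a j k ^ q' := by
      refine Finset.sum_congr rfl fun k _ => ?_
      rw [abs_of_nonneg (Real.rpow_nonneg (ha j k) _), ← Real.rpow_mul (ha j k), hexp2]
    rw [eL, eR1, eR2, one_div_div, one_div_div] at H
    exact H
  -- column-wise Hölder
  have hS2nn : ∀ j, (0:ℝ) ≤ ∑ k ∈ Finset.range N, a j k ^ (2 : ℝ) :=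
    fun j => Finset.sum_nonneg fun k _ => Real.rpow_nonneg (ha j k) _
  have hSqnn : ∀ j, (0:ℝ) ≤ ∑ k ∈ Finset.range N, a j k ^ q' :=
    fun j => Finset.sum_nonneg fun k _ => Real.rpow_nonneg (ha j k) _
  have H2 := Real.inner_le_Lp_mul_Lq (Finset.range N)
    (fun j => (∑ k ∈ Finset.range N, a j k ^ (2 : ℝ)) ^ (r / 4))
    (fun j => (∑ k ∈ Finset.range N, a j k ^ q') ^ ((4 - r) / 4)) hct
  have eR1 : ∑ j ∈ Finset.range N,
      |(∑ k ∈ Finset.range N, a j k ^ (2 : ℝ)) ^ (r / 4)| ^ (2 * q' / r)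
      = ∑ j ∈ Finset.range N,
        (∑ k ∈ Finset.range N, a j k ^ (2 : ℝ)) ^ ((1 / 2) * q') := by
    refine Finset.sum_congr rfl fun j _ => ?_
    rw [abs_of_nonneg (Real.rpow_nonneg (hS2nn j) _), ← Real.rpow_mul (hS2nn j), hexp3]
  have eR2 : ∑ j ∈ Finset.range N,
      |(∑ k ∈ Finset.range N, a j k ^ q') ^ ((4 - r) / 4)| ^ (4 / r)
      = ∑ j ∈ Finset.range N,
        (∑ k ∈ Finset.range N, a j k ^ q') ^ (2 * ((p - 1) / p)) := by
    refine Finset.sum_congr rfl fun j _ => ?_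
    rw [abs_of_nonneg (Real.rpow_nonneg (hSqnn j) _), ← Real.rpow_mul (hSqnn j), hexp4]
  rw [eR1, eR2, one_div_div, one_div_div] at H2
  set U : ℝ := ∑ j ∈ Finset.range N,
    (∑ k ∈ Finset.range N, a j k ^ (2 : ℝ)) ^ ((1 / 2) * q') with hUdef
  set V : ℝ := ∑ j ∈ Finset.range N,
    (∑ k ∈ Finset.range N, a j k ^ q') ^ (2 * ((p - 1) / p)) with hVdef
  have hUnn : 0 ≤ U := Finset.sum_nonneg fun j _ => Real.rpow_nonneg (hS2nn j) _
  have hVnn : 0 ≤ V := Finset.sum_nonneg fun j _ => Real.rpow_nonneg (hSqnn j) _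
  have hT : (∑ j ∈ Finset.range N, ∑ k ∈ Finset.range N, a j k ^ r)
      ≤ U ^ (r / (2 * q')) * V ^ (r / 4) := by
    refine le_trans (Finset.sum_le_sum fun j _ => step1 j) ?_
    exact H2
  have hTnn : (0:ℝ) ≤ ∑ j ∈ Finset.range N, ∑ k ∈ Finset.range N, a j k ^ r :=
    Finset.sum_nonneg fun j _ => Finset.sum_nonneg fun k _ => Real.rpow_nonneg (ha j k) _
  have h1r : (3 * p - 2) / (4 * p) = 1 / r := by rw [hrdef, one_div_div]
  rw [h1r]
  have hM1nn : 0 ≤ M1 := le_trans (Real.rpow_nonneg hUnn _) h1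
  have hM2nn : 0 ≤ M2 := le_trans (Real.rpow_nonneg hVnn _) h2
  calc (∑ j ∈ Finset.range N, ∑ k ∈ Finset.range N, a j k ^ r) ^ ((1:ℝ) / r)
      ≤ (U ^ (r / (2 * q')) * V ^ (r / 4)) ^ ((1:ℝ) / r) :=
        Real.rpow_le_rpow hTnn hT (by positivity)
    _ = (U ^ ((p - 1) / p)) ^ ((1:ℝ)/2) * (V ^ ((1:ℝ)/2)) ^ ((1:ℝ)/2) := by
        rw [Real.mul_rpow (Real.rpow_nonneg hUnn _) (Real.rpow_nonneg hVnn _),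
          ← Real.rpow_mul hUnn, ← Real.rpow_mul hVnn,
          ← Real.rpow_mul hUnn, ← Real.rpow_mul hVnn]
        congr 1
        · congr 1
          rw [hrdef, hqdef]; field_simp [show p * 3 - 2 ≠ 0 by linarith]
        · congr 1
          rw [hrdef]; field_simp [show p * 3 - 2 ≠ 0 by linarith]; ring
    _ ≤ M1 ^ ((1:ℝ)/2) * M2 ^ ((1:ℝ)/2) := by
        have b1 : (U ^ ((p - 1) / p)) ^ ((1:ℝ)/2) ≤ M1 ^ ((1:ℝ)/2) :=
          Real.rpow_le_rpow (Real.rpow_nonneg hUnn _) h1 (by norm_num)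
        have b2 : (V ^ ((1:ℝ)/2)) ^ ((1:ℝ)/2) ≤ M2 ^ ((1:ℝ)/2) :=
          Real.rpow_le_rpow (Real.rpow_nonneg hVnn _) h2 (by norm_num)
        exact mul_le_mul b1 b2 (Real.rpow_nonneg (Real.rpow_nonneg hVnn _) _)
          (Real.rpow_nonneg hM1nn _)

/-- For `p ≥ p₀/(p₀−1)` (where `Γ((p₀+1)/2) = √π/2`): assuming the optimal constant in the
2-variable mixed inequality is `C_{(2),p} = 2^{1/2−1/p}`, and the mixed inequality
`(Σ_j (Σ_k |A(e_j,e_k)|^{p/(p−1)})^{2(p−1)/p})^{1/2} ≤ √2‖A‖`, the optimal constant `C_{p,∞}` in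
`(Σ_{j,k}|A(e_j,e_k)|^{4p/(3p−2)})^{(3p−2)/(4p)} ≤ C_{p,∞}‖A‖` over bounded bilinear
`A : ℓ_p × c₀ → ℝ` satisfies `2^{1/2−1/p} ≤ C_{p,∞} ≤ 2^{1/2−1/(2p)}`
(all sums expressed via all finite truncations). -/
theorem stmt19 (p₀ : ℝ) (h₁ : 1 < p₀) (h₂ : p₀ < 2)
    (hΓ : Real.Gamma ((p₀ + 1) / 2) = Real.sqrt π / 2)
    (p : ℝ) (hp : p₀ / (p₀ - 1) ≤ p) [Fact (1 ≤ ENNReal.ofReal p)]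
    (hopt : IsLeast {C : ℝ |
      ∀ (A : lp (fun _ : ℕ => ℝ) (ENNReal.ofReal p) →L[ℝ] (Czero →L[ℝ] ℝ)) (N : ℕ),
        (∑ j ∈ Finset.range N, (∑ k ∈ Finset.range N,
            |A (ep p j) (e0 k)| ^ (2 : ℝ)) ^ ((1 / 2) * (p / (p - 1)))) ^ ((p - 1) / p)
          ≤ C * ‖A‖}
      (2 ^ ((1 : ℝ) / 2 - 1 / p)))
    (hsqrt : ∀ (A : lp (fun _ : ℕ => ℝ) (ENNReal.ofReal p) →L[ℝ] (Czero →L[ℝ] ℝ)) (N : ℕ),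
      (∑ j ∈ Finset.range N, (∑ k ∈ Finset.range N,
          |A (ep p j) (e0 k)| ^ (p / (p - 1))) ^ (2 * ((p - 1) / p))) ^ ((1 : ℝ) / 2)
        ≤ Real.sqrt 2 * ‖A‖) :
    ∃ C : ℝ, IsLeast {C : ℝ |
      ∀ (A : lp (fun _ : ℕ => ℝ) (ENNReal.ofReal p) →L[ℝ] (Czero →L[ℝ] ℝ)) (N : ℕ),
        (∑ j ∈ Finset.range N, ∑ k ∈ Finset.range N,
            |A (ep p j) (e0 k)| ^ (4 * p / (3 * p - 2))) ^ ((3 * p - 2) / (4 * p))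
          ≤ C * ‖A‖} C ∧
      2 ^ ((1 : ℝ) / 2 - 1 / p) ≤ C ∧ C ≤ 2 ^ ((1 : ℝ) / 2 - 1 / (2 * p)) := by
  have hp2 : 2 < p := by
    have hd : (2:ℝ) < p₀ / (p₀ - 1) := by rw [lt_div_iff₀ (by linarith)]; linarith
    linarith
  have hp0 : (0:ℝ) < p := by linarith
  -- upper bound: the constant 2^(1/2 - 1/(2p)) works
  have hupper : ∀ (A : lp (fun _ : ℕ => ℝ) (ENNReal.ofReal p) →L[ℝ] (Czero →L[ℝ] ℝ)) (N : ℕ),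
      (∑ j ∈ Finset.range N, ∑ k ∈ Finset.range N,
          |A (ep p j) (e0 k)| ^ (4 * p / (3 * p - 2))) ^ ((3 * p - 2) / (4 * p))
        ≤ 2 ^ ((1 : ℝ) / 2 - 1 / (2 * p)) * ‖A‖ := by
    intro A N
    have hk := key_holder hp2 (fun j k => |A (ep p j) (e0 k)|)
      (fun j k => abs_nonneg _) (hopt.1 A N) (hsqrt A N)
    refine le_trans hk (le_of_eq ?_)
    rw [Real.mul_rpow (by positivity) (norm_nonneg A),
      Real.mul_rpow (Real.sqrt_nonneg 2) (norm_nonneg A), mul_mul_mul_comm,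
      ← Real.rpow_add' (norm_nonneg A) (by norm_num : (1:ℝ)/2 + 1/2 ≠ 0),
      show (1:ℝ)/2 + 1/2 = 1 by norm_num, Real.rpow_one,
      Real.sqrt_eq_rpow, ← Real.rpow_mul (by norm_num : (0:ℝ) ≤ 2),
      ← Real.rpow_mul (by norm_num : (0:ℝ) ≤ 2),
      ← Real.rpow_add (by norm_num : (0:ℝ) < 2)]
    congr 1
    field_simp
    ring
  -- lower bound: every admissible constant is at least 2^(1/2 - 1/p)
  have hlb : ∀ C : ℝ, (∀ (A : lp (fun _ : ℕ => ℝ) (ENNReal.ofReal p) →L[ℝ] (Czero →L[ℝ] ℝ))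
      (N : ℕ), (∑ j ∈ Finset.range N, ∑ k ∈ Finset.range N,
        |A (ep p j) (e0 k)| ^ (4 * p / (3 * p - 2))) ^ ((3 * p - 2) / (4 * p)) ≤ C * ‖A‖) →
      2 ^ ((1 : ℝ) / 2 - 1 / p) ≤ C := by
    intro C hC
    have h4 := hC (Aex p) 2
    have hsum : (∑ j ∈ Finset.range 2, ∑ k ∈ Finset.range 2,
        |(Aex p) (ep p j) (e0 k)| ^ (4 * p / (3 * p - 2))) = 4 := by
      rw [Finset.sum_congr rfl (fun j hj => Finset.sum_congr rfl (fun k hk => by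
        rw [Aex_entry p j k (Finset.mem_range.mp hj) (Finset.mem_range.mp hk),
          Real.one_rpow]))]
      norm_num
    rw [hsum] at h4
    have hpos4 : (0:ℝ) < (4:ℝ) ^ ((3 * p - 2) / (4 * p)) :=
      Real.rpow_pos_of_pos (by norm_num) _
    have hCpos : 0 < C := by
      by_contra hneg
      push_neg at hneg
      have : C * ‖Aex p‖ ≤ 0 := mul_nonpos_of_nonpos_of_nonneg hneg (norm_nonneg _)
      linarith [lt_of_lt_of_le hpos4 h4]
    have h5 : (4:ℝ) ^ ((3 * p - 2) / (4 * p)) ≤ C * 2 :=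
      le_trans h4 (mul_le_mul_of_nonneg_left (Aex_norm_le p) hCpos.le)
    have h6 : (4:ℝ) ^ ((3 * p - 2) / (4 * p)) = 2 ^ ((1 : ℝ) / 2 - 1 / p) * 2 := by
      have e4 : (4:ℝ) ^ ((3 * p - 2) / (4 * p)) = 2 ^ (((1:ℝ)/2 - 1/p) + 1) := by
        nth_rewrite 1 [show (4:ℝ) = 2 ^ (2:ℕ) by norm_num]
        rw [← Real.rpow_natCast 2 2, ← Real.rpow_mul (by norm_num : (0:ℝ) ≤ 2)]
        congr 1
        push_cast
        field_simp
        ring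
      rw [e4, Real.rpow_add (by norm_num : (0:ℝ) < 2), Real.rpow_one]
    rw [h6] at h5
    exact (mul_le_mul_iff_of_pos_right (by norm_num : (0:ℝ) < 2)).mp h5
  set Sset : Set ℝ := {C : ℝ |
      ∀ (A : lp (fun _ : ℕ => ℝ) (ENNReal.ofReal p) →L[ℝ] (Czero →L[ℝ] ℝ)) (N : ℕ),
        (∑ j ∈ Finset.range N, ∑ k ∈ Finset.range N,
            |A (ep p j) (e0 k)| ^ (4 * p / (3 * p - 2))) ^ ((3 * p - 2) / (4 * p))
          ≤ C * ‖A‖} with hSset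
  have hmemU : (2:ℝ) ^ ((1 : ℝ) / 2 - 1 / (2 * p)) ∈ Sset := hupper
  have hlb' : ∀ C ∈ Sset, 2 ^ ((1 : ℝ) / 2 - 1 / p) ≤ C := fun C hC => hlb C hC
  have hbdd : BddBelow Sset := ⟨2 ^ ((1 : ℝ) / 2 - 1 / p), hlb'⟩
  have hne : Sset.Nonempty := ⟨_, hmemU⟩
  refine ⟨sInf Sset, ⟨?_, fun C hC => csInf_le hbdd hC⟩,
    le_csInf hne hlb', csInf_le hbdd hmemU⟩
  intro A N
  by_cases hA : ‖A‖ = 0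
  · have h0 := hupper A N
    rw [hA, mul_zero] at h0
    rw [hA, mul_zero]
    exact h0
  · have hA' : 0 < ‖A‖ := lt_of_le_of_ne (norm_nonneg A) (Ne.symm hA)
    rw [← div_le_iff₀ hA']
    refine le_csInf hne fun C hC => ?_
    rw [div_le_iff₀ hA']
    exact hC A N
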